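/- Let n = 2, l ≥ 0, and let α = (α₁,α₂), γ = (γ₁,γ₂) ∈ B^{(2)}_l satisfy s := γ₁ − α₁ = α₂ − γ₂ ≥ 0. Then the following identity holds in F((t)): K^{(2,l)}(z)^γ_α = q^{α₁γ₂} t^{s} · (q^{−l}t;q)_{l+1} (q;q)_s (−q;q)_{α₁+γ₁} (−q;q)_{α₂+γ₂} · ((q²;q²)_l (−qt;q)_l)^{−1} · Σ_{j=0}^{α₁} Σ_{k=0}^{γ₂} q^{j+k} (q^{−2α₁};q²)_j (q^{−2γ₂};q²)_k · ((q^{j+k−l}t;q)_{s+1} (q;q)_j (q;q)_k (−q^{−α₁−γ₁};q)_j (−q^{−α₂−γ₂};q)_k)^{−1}, where each factor (q^{j+k−l}t;q)_{s+1} has constant term 1 and is therefore invertible in F[[t]]. (This is the explicit double-sum formula for all matrix elements of the K matrix of U_q(A^{(1)}_1).) -/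

import Mathlib

open scoped Classical

noncomputable section

namespace KOY

/-- `F = ℚ(q)`, the field of rational functions in an indeterminate `q` over `ℚ`. -/
abbrev Fq : Type := RatFunc ℚ

/-- The indeterminate `q`. -/
def q : Fq := RatFunc.X

/-- `[u] = (q^u - q^{-u})/(q - q⁻¹)`. -/
def qint (u : ℤ) : Fq := (q ^ u - q ^ (-u)) / (q - q⁻¹)

/-- `(z; a)_m = ∏_{k=0}^{m-1} (1 - z a^k)`. -/
def poch {R : Type*} [CommRing R] (z a : R) (m : ℕ) : R :=
  ∏ k ∈ Finset.range m, (1 - z * a ^ k)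

/-- The `q`-boson Fock space `⊕_{m ≥ 0} F·|m⟩`. -/
abbrev Fock : Type := ℕ →₀ Fq

/-- creation operator `a⁺ |m⟩ = |m+1⟩`. -/
def aP : Module.End Fq Fock := Finsupp.lift Fock Fq ℕ fun m => Finsupp.single (m + 1) 1

/-- annihilation operator `a⁻ |m⟩ = (1-q^m)|m-1⟩`. -/
def aM : Module.End Fq Fock :=
  Finsupp.lift Fock Fq ℕ fun m => (1 - q ^ m) • Finsupp.single (m - 1) 1

/-- `k |m⟩ = q^m |m⟩`. -/
def kO : Module.End Fq Fock := Finsupp.lift Fock Fq ℕ fun m => q ^ m • Finsupp.single m 1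

/-- The operator `G^j_i` for `i, j ≥ 0` (`i` = lower index, `j` = upper index):
`G^j_i = (-q;q)_{i+j} Σ_{m=0}^{t} ((q^{-t};q)_m (-q^{-t};q)_m / ((q;q)_m (-q^{-s};q)_m))
  (a⁺)^{(j-i)_+} (q^m k^m) (a⁻)^{(i-j)_+}` with `s = i+j`, `t = min i j`. -/
def GopN (i j : ℕ) : Module.End Fq Fock :=
  poch (-q) q (i + j) •
    ∑ m ∈ Finset.range (min i j + 1),
      (poch (q ^ (-(min i j : ℤ))) q m * poch (-q ^ (-(min i j : ℤ))) q m /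
          (poch q q m * poch (-q ^ (-((i : ℤ) + j))) q m)) •
        (aP ^ (j - i) * (q ^ m • kO ^ m) * aM ^ (i - j))

/-- `G^j_i` with the convention that it vanishes for negative indices. -/
def Gop (i j : ℤ) : Module.End Fq Fock :=
  if 0 ≤ i ∧ 0 ≤ j then GopN i.toNat j.toNat else 0

/-- `X_{mm}`: the coefficient of `|m⟩` in `X |m⟩`. -/
def elem (X : Module.End Fq Fock) (m : ℕ) : Fq := X (Finsupp.single m 1) m

/-- `⟨a, b⟩ = ∑_{i<j} a_i b_j` (natural numbers). -/
def innN {n : ℕ} (a b : Fin n → ℕ) : ℕ := ∑ i, ∑ j, if i < j then a i * b j else 0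

/-- `⟨a, b⟩ = ∑_{i<j} a_i b_j` (integers). -/
def innZ {n : ℕ} (a b : Fin n → ℤ) : ℤ := ∑ i, ∑ j, if i < j then a i * b j else 0

/-- `|a| = ∑ a_i`. -/
def asum {k : ℕ} (a : Fin k → ℤ) : ℤ := ∑ i, a i

/-- coercion of arrays to integer arrays. -/
def castZ {n : ℕ} (a : Fin n → ℕ) : Fin n → ℤ := fun i => (a i : ℤ)

/-- The matrix product formula for `K^{(n,l)}(z)^γ_α` as a power series in `t = z⁻¹`:
`q^{⟨γ,α⟩} (q^{-l}t;q)_{l+1} ((q²;q²)_l (-qt;q)_l)⁻¹ Σ_{m≥0} q^{-lm} t^m (G^{γ₁}_{α₁}⋯G^{γₙ}_{αₙ})_{mm}`,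
with coefficients transported along a ring hom `f` from `ℚ(q)`. -/
def KmatPS {K : Type*} [Field K] (f : Fq →+* K) (n l : ℕ) (α γ : Fin n → ℕ) :
    PowerSeries K :=
  PowerSeries.C (R := K) (f (q ^ innN γ α)) *
    poch (PowerSeries.C (R := K) (f (q ^ (-(l : ℤ)))) * PowerSeries.X) (PowerSeries.C (R := K) (f q)) (l + 1) *
    (PowerSeries.C (R := K) (f (poch (q ^ 2) (q ^ 2) l)) *
        poch (PowerSeries.C (R := K) (f (-q)) * PowerSeries.X) (PowerSeries.C (R := K) (f q)) l)⁻¹ *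
    PowerSeries.mk fun m =>
      f (q ^ (-(l * m : ℤ)) * elem (List.ofFn fun i => Gop (α i) (γ i)).prod m)

/-- `F((t))`, the field of formal Laurent series in `t`. -/
abbrev LS : Type := LaurentSeries Fq

/-- `K^{(n,l)}(z)^γ_α ∈ F((t))` (first array = lower index `α`, second = upper index `γ`). -/
def Kmat (n l : ℕ) (α γ : Fin n → ℕ) : LS :=
  HahnSeries.ofPowerSeries ℤ Fq (KmatPS (RingHom.id Fq) n l α γ)

/-- Extension of `Kmat` to integer arrays, vanishing if some entry is negative. -/
def KmatZ (n l : ℕ) (α γ : Fin n → ℤ) : LS :=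
  if (∀ i, 0 ≤ α i) ∧ ∀ i, 0 ≤ γ i then
    Kmat n l (fun i => (α i).toNat) fun i => (γ i).toNat
  else 0

/-- `t ∈ F((t))`. -/
def T : LS := HahnSeries.single (1 : ℤ) (1 : Fq)

/-- the constant embedding `F → F((t))`. -/
def CL : Fq →+* LS := HahnSeries.C

/-- `Φ̄_q(γ|β; λ, μ)` for integer arrays, vanishing unless `0 ≤ γ ≤ β`. -/
def phiBarP {K : Type*} [Field K] (qv lam mu : K) {k : ℕ} (γ β : Fin k → ℤ) : K :=
  if ∀ i, 0 ≤ γ i ∧ γ i ≤ β i then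
    poch lam qv (asum γ).toNat * poch (mu / lam) qv (asum β - asum γ).toNat /
        poch mu qv (asum β).toNat *
      ∏ i, poch qv qv (β i).toNat / (poch qv qv (β i - γ i).toNat * poch qv qv (γ i).toNat)
  else 0

/-- `Φ_q(γ|β; λ, μ) = q^{⟨β-γ,γ⟩} (μ/λ)^{|γ|} Φ̄_q(γ|β; λ, μ)`. -/
def phiP {K : Type*} [Field K] (qv lam mu : K) {k : ℕ} (γ β : Fin k → ℤ) : K :=
  qv ^ innZ (β - γ) γ * (mu / lam) ^ asum γ * phiBarP qv lam mu γ β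

/-- truncation `ᾱ = (α₁, …, α_{n-1})` (as an integer array). -/
def bar {n : ℕ} (a : Fin n → ℕ) : Fin (n - 1) → ℤ :=
  fun i => (a ⟨i.val, by have := i.isLt; omega⟩ : ℤ)

/-- `A^{(l,m)}(z)^{γ,δ}_{α,β}
  = q^{⟨α,β⟩-⟨δ,γ⟩} Σ_{ξ̄+η̄=γ̄+δ̄} Φ_{q²}(ξ̄-δ̄|ξ̄; q^{m-l}z, q^{-l-m}z) Φ_{q²}(η̄|β̄; q^{-l-m}z⁻¹, q^{-2m})`
in any field, for chosen values of `q` and `z`. -/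
def Amat {K : Type*} [Field K] (qv zv : K) {n : ℕ} (l m : ℕ) (γ δ α β : Fin n → ℕ) : K :=
  qv ^ ((innN α β : ℤ) - (innN δ γ : ℤ)) *
    ∑ ξ ∈ Finset.Icc (0 : Fin (n - 1) → ℤ) (bar γ + bar δ),
      phiP (qv ^ 2) (qv ^ ((m : ℤ) - l) * zv) (qv ^ (-(l : ℤ) - m) * zv) (ξ - bar δ) ξ *
        phiP (qv ^ 2) (qv ^ (-(l : ℤ) - m) * zv⁻¹) (qv ^ (-(2 * m : ℤ))) (bar γ + bar δ - ξ)
          (bar β)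

/-- `𝒮(λ,μ)^{γ,δ}_{α,β} = θ(γ+δ=α+β) q^{⟨β-γ,γ⟩+⟨α,β-γ⟩+|α||β|-|γ||δ|} λ^{2(|δ|-|α|)}
  Φ̄_{q²}(α|δ; λ², μ²)`, the parametric `R` matrix element. -/
def Smat {K : Type*} [Field K] (qv lam mu : K) {k : ℕ} (γ δ α β : Fin k → ℕ) : K :=
  if γ + δ = α + β then
    qv ^ (innZ (castZ β - castZ γ) (castZ γ) + innZ (castZ α) (castZ β - castZ γ) +
          (asum (castZ α) * asum (castZ β) - asum (castZ γ) * asum (castZ δ))) *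
      lam ^ (2 * (asum (castZ δ) - asum (castZ α))) *
      phiBarP (qv ^ 2) (lam ^ 2) (mu ^ 2) (castZ α) (castZ δ)
  else 0

/-- reversal `ρ(a) = (a_n, …, a_1)`. -/
def rev {n : ℕ} {M : Type*} (a : Fin n → M) : Fin n → M := fun i => a i.rev

/-- cyclic shift `σ(a) = (a_2, …, a_n, a_1)`. -/
def cyc {n : ℕ} {M : Type*} (a : Fin n → M) : Fin n → M :=
  fun i => a ⟨(i.val + 1) % n, Nat.mod_lt _ (by have := i.isLt; omega)⟩

/-- the cyclic successor on `Fin n`. -/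
def nxt {n : ℕ} (i : Fin n) : Fin n :=
  ⟨(i.val + 1) % n, Nat.mod_lt _ (by have := i.isLt; omega)⟩

/-- deletion of the `i`-th entry of an array. -/
def del {n : ℕ} (i : Fin n) (a : Fin n → ℕ) : Fin (n - 1) → ℕ :=
  fun j =>
    if (j : ℕ) < (i : ℕ) then a ⟨j, by have := j.isLt; omega⟩
    else a ⟨(j : ℕ) + 1, by have := j.isLt; omega⟩

/-- the `q²`-binomial coefficient `binom(b, c)_{q²}` as an element of `ℚ(q)`. -/
def qbinom2 (b c : ℕ) : Fq :=
  poch (q ^ 2) (q ^ 2) b / (poch (q ^ 2) (q ^ 2) (b - c) * poch (q ^ 2) (q ^ 2) c)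

/-- `ℚ(q)(z) = ℚ(q, z)`. -/
abbrev Fqz : Type := RatFunc Fq

/-- the image of `q` in `ℚ(q, z)`. -/
def qz : Fqz := RatFunc.C q

/-- the indeterminate `z` in `ℚ(q, z)`. -/
def zz : Fqz := RatFunc.X

lemma q_ne_zero : q ≠ 0 := RatFunc.X_ne_zero

lemma one_add_q_pow_ne_zero (n : ℕ) : (1 : Fq) + q ^ n ≠ 0 := by
  have : (1 : Fq) + q ^ n = algebraMap (Polynomial ℚ) Fq (1 + Polynomial.X ^ n) := by
    rw [map_add, map_one, map_pow, RatFunc.algebraMap_X, q]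
  rw [this]
  apply RatFunc.algebraMap_ne_zero
  intro h
  have h2 := congrArg (Polynomial.eval 1) h
  simp at h2

lemma one_sub_q_pow_ne_zero (n : ℕ) (hn : n ≠ 0) : (1 : Fq) - q ^ n ≠ 0 := by
  have : (1 : Fq) - q ^ n = algebraMap (Polynomial ℚ) Fq (1 - Polynomial.X ^ n) := by
    rw [map_sub, map_one, map_pow, RatFunc.algebraMap_X, q]
  rw [this]
  apply RatFunc.algebraMap_ne_zero
  intro h
  have h2 := congrArg (fun p => Polynomial.coeff p n) h
  simp [Polynomial.coeff_one, hn] at h2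

lemma one_add_q_zpow_ne_zero (e : ℤ) : (1 : Fq) + q ^ e ≠ 0 := by
  rcases le_or_gt 0 e with h | h
  · lift e to ℕ using h
    rw [zpow_natCast]; exact one_add_q_pow_ne_zero e
  · intro hc
    have hq : q ^ (-e) ≠ 0 := zpow_ne_zero _ q_ne_zero
    have : ((1 : Fq) + q ^ e) * q ^ (-e) = q ^ (-e) + 1 := by
      rw [add_mul, one_mul, ← zpow_add₀ q_ne_zero]; simp
    rw [hc, zero_mul] at this
    have he : (0:ℤ) ≤ -e := by omega
    lift (-e) to ℕ using he with n hn
    rw [zpow_natCast] at this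
    exact one_add_q_pow_ne_zero n (by rw [add_comm] at this; exact this.symm)

lemma one_sub_q_zpow_ne_zero (e : ℤ) (he : e ≠ 0) : (1 : Fq) - q ^ e ≠ 0 := by
  rcases le_or_gt 0 e with h | h
  · lift e to ℕ using h
    rw [zpow_natCast]
    exact one_sub_q_pow_ne_zero e (by exact_mod_cast he)
  · intro hc
    have : ((1 : Fq) - q ^ e) * q ^ (-e) = q ^ (-e) - 1 := by
      rw [sub_mul, one_mul, ← zpow_add₀ q_ne_zero]; simp
    rw [hc, zero_mul] at this
    have hz : (0:ℤ) ≤ -e := by omega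
    lift (-e) to ℕ using hz with n hn
    rw [zpow_natCast] at this
    refine one_sub_q_pow_ne_zero n (by omega) ?_
    have := this.symm
    linear_combination -this

lemma poch_q_q_ne_zero (m : ℕ) : poch q q m ≠ 0 := by
  rw [poch]
  apply Finset.prod_ne_zero_iff.2
  intro k _
  have : q * q ^ k = q ^ (k+1) := by ring
  rw [this]
  exact one_sub_q_pow_ne_zero _ (Nat.succ_ne_zero k)

lemma poch_q2_q2_ne_zero (m : ℕ) : poch (q^2) (q^2) m ≠ 0 := by
  rw [poch]
  apply Finset.prod_ne_zero_iff.2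
  intro k _
  have : q^2 * (q^2) ^ k = q ^ (2*k+2) := by ring
  rw [this]
  exact one_sub_q_pow_ne_zero _ (by omega)

lemma poch_neg_zpow_ne_zero (a : ℤ) (m : ℕ) : poch (-q ^ a) q m ≠ 0 := by
  rw [poch]
  apply Finset.prod_ne_zero_iff.2
  intro k _
  have : (1:Fq) - (-q^a) * q ^ k = 1 + q ^ (a + k) := by
    rw [zpow_add₀ q_ne_zero, zpow_natCast]; ring
  rw [this]
  exact one_add_q_zpow_ne_zero _

lemma poch_mul_poch_neg {R : Type*} [CommRing R] (z a : R) (m : ℕ) :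
    poch z a m * poch (-z) a m = poch (z^2) (a^2) m := by
  rw [poch, poch, poch, ← Finset.prod_mul_distrib]
  apply Finset.prod_congr rfl
  intro k _
  ring

lemma lift_single (f : ℕ → Fock) (m : ℕ) (c : Fq) :
    Finsupp.lift Fock Fq ℕ f (Finsupp.single m c) = c • f m := by
  rw [Finsupp.lift_apply, Finsupp.sum_single_index]
  simp

lemma aP_single (m : ℕ) : aP (Finsupp.single m 1) = Finsupp.single (m+1) 1 := by
  rw [aP, lift_single, one_smul]

lemma aM_single (m : ℕ) : aM (Finsupp.single m 1) = (1 - q ^ m) • Finsupp.single (m-1) 1 := by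
  rw [aM, lift_single, one_smul]

lemma kO_single (m : ℕ) : kO (Finsupp.single m 1) = q ^ m • Finsupp.single m 1 := by
  rw [kO, lift_single, one_smul]

lemma aP_pow_single (s m : ℕ) : (aP ^ s) (Finsupp.single m 1) = Finsupp.single (m+s) 1 := by
  induction s with
  | zero => simp
  | succ n ih =>
    rw [pow_succ', Module.End.mul_apply, ih, aP_single]
    congr 1

lemma aM_pow_single (s m : ℕ) :
    (aM ^ s) (Finsupp.single m 1) =
      (∏ r ∈ Finset.range s, (1 - q ^ (m - r))) • Finsupp.single (m - s) 1 := by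
  induction s with
  | zero => simp
  | succ n ih =>
    rw [pow_succ', Module.End.mul_apply, ih, map_smul, aM_single, Finset.prod_range_succ,
      smul_smul]
    congr 1

lemma kO_pow_single (s m : ℕ) :
    (kO ^ s) (Finsupp.single m 1) = (q ^ (s * m)) • Finsupp.single m 1 := by
  induction s with
  | zero => simp
  | succ n ih =>
    rw [pow_succ', Module.End.mul_apply, ih, map_smul, kO_single, smul_smul, ← pow_add]
    congr 2
    ring

lemma GopN_single (i j m0 : ℕ) :
    GopN i j (Finsupp.single m0 1) =
      (poch (-q) q (i+j) * (∏ r ∈ Finset.range (i-j), (1 - q ^ (m0 - r))) *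
        ∑ m ∈ Finset.range (min i j + 1),
          (poch (q ^ (-(min i j : ℤ))) q m * poch (-q ^ (-(min i j : ℤ))) q m /
            (poch q q m * poch (-q ^ (-((i:ℤ)+j))) q m)) * q ^ (m * (m0 - (i-j)) + m)) •
        Finsupp.single (m0 - (i - j) + (j - i)) 1 := by
  simp only [GopN, LinearMap.smul_apply, LinearMap.sum_apply, Module.End.mul_apply,
    aM_pow_single, map_smul, kO_pow_single, aP_pow_single, smul_smul]
  rw [← Finset.sum_smul, smul_smul]
  congr 1
  rw [Finset.mul_sum, Finset.mul_sum]
  apply Finset.sum_congr rfl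
  intro m _
  rw [pow_add]
  ring

lemma elem_G1G2 (a g s m : ℕ) :
    elem (GopN a (a+s) * GopN (g+s) g) m =
      poch (-q) q (a+(a+s)) * poch (-q) q ((g+s)+g) *
        (∏ r ∈ Finset.range s, (1 - q ^ (m - r))) *
        ((∑ j ∈ Finset.range (a+1),
            (poch (q ^ (-(a:ℤ))) q j * poch (-q ^ (-(a:ℤ))) q j /
              (poch q q j * poch (-q ^ (-((a:ℤ)+(↑(a+s))))) q j)) * q ^ (j*(m-s)+j)) *
         (∑ k ∈ Finset.range (g+1),
            (poch (q ^ (-(g:ℤ))) q k * poch (-q ^ (-(g:ℤ))) q k /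
              (poch q q k * poch (-q ^ (-((↑(g+s):ℤ)+(g:ℤ)))) q k)) * q ^ (k*(m-s)+k))) := by
  have hmin2 : min (g+s) g = g := by omega
  have hsub2a : (g+s) - g = s := by omega
  have hsub2b : g - (g+s) = 0 := by omega
  have hmin1 : min a (a+s) = a := by omega
  have hmin2z : (↑(g+s) : ℤ) ⊓ (g:ℤ) = (g:ℤ) := by omega
  have hmin1z : (a : ℤ) ⊓ (↑(a+s):ℤ) = (a:ℤ) := by omega
  have hsub1a : a - (a+s) = 0 := by omega
  have hsub1b : (a+s) - a = s := by omega
  rw [elem, Module.End.mul_apply, GopN_single, hmin2, hsub2a, hsub2b, map_smul,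
    GopN_single, hmin1, hsub1a, hsub1b]
  simp only [hmin1z, hmin2z, Finset.range_zero, Finset.prod_empty, mul_one, Nat.sub_zero,
    add_zero, pow_zero, Finsupp.smul_apply, smul_eq_mul, Finsupp.single_apply]
  by_cases h : s ≤ m
  · have hm : m - s + s = m := by omega
    rw [hm, if_pos rfl]
    ring
  · have hA : (∏ r ∈ Finset.range s, (1 - q ^ (m - r))) = 0 := by
      apply Finset.prod_eq_zero (Finset.mem_range.2 (by omega : m < s))
      simp
    rw [hA]
    ring

open PowerSeries in
lemma one_sub_CX_mul_mk (a : Fq) (f : ℕ → Fq) (n : ℕ) :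
    (coeff n) ((1 - C a * X) * mk f) = f n - a * (if n = 0 then 0 else f (n-1)) := by
  rw [sub_mul, one_mul, map_sub, mul_assoc, coeff_C_mul]
  cases n with
  | zero => simp
  | succ p => rw [coeff_succ_X_mul, coeff_mk, coeff_mk]; simp

lemma poch_succ {R : Type*} [CommRing R] (z a : R) (s : ℕ) :
    poch z a (s+1) = poch z a s * (1 - z * a ^ s) := Finset.prod_range_succ _ _

lemma poch_succ' {R : Type*} [CommRing R] (z a : R) (s : ℕ) :
    poch z a (s+1) = (1 - z) * poch (z * a) a s := by
  rw [poch, Finset.prod_range_succ', poch]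
  simp only [pow_zero, mul_one, pow_succ]
  rw [mul_comm]
  congr 1
  apply Finset.prod_congr rfl
  intro k _
  ring

open PowerSeries in
lemma step_lemma (x : Fq) (s : ℕ) :
    (1 - C (x * q^(s+1)) * X) * mk (fun p => x^p * poch (q^(p+1)) q (s+1)) =
      C (1 - q^(s+1)) * mk (fun p => x^p * poch (q^(p+1)) q s) := by
  ext n
  rw [one_sub_CX_mul_mk, coeff_C_mul, coeff_mk]
  cases n with
  | zero =>
    rw [if_pos rfl, mul_zero, sub_zero, poch_succ]
    ring
  | succ p =>
    simp only [Nat.succ_ne_zero, if_false, Nat.add_sub_cancel]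
    rw [poch_succ (q^(p+1+1)) q s, poch_succ' (q^(p+1)) q s]
    have h1 : q^(p+1) * q = q^(p+1+1) := by ring
    rw [h1]
    ring

open PowerSeries in
lemma base_lemma (x : Fq) :
    (1 - C x * X) * mk (fun p => x^p * poch (q^(p+1)) q 0) = 1 := by
  ext n
  rw [one_sub_CX_mul_mk]
  simp only [poch, Finset.range_zero, Finset.prod_empty, mul_one]
  cases n with
  | zero => simp
  | succ p => simp [pow_succ, PowerSeries.coeff_one]; ring

open PowerSeries in
lemma key_lemma (x : Fq) (s : ℕ) :
    poch (C x * X) (C q) (s+1) * mk (fun p => x^p * poch (q^(p+1)) q s) =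
      C (poch q q s) := by
  induction s with
  | zero =>
    have : poch (C x * X) (C q) 1 = 1 - C x * X := by
      rw [poch]; simp
    rw [this, base_lemma]
    simp [poch]
  | succ s ih =>
    have hp : poch (C x * X) (C q) (s+2) =
        poch (C x * X) (C q) (s+1) * (1 - C (x * q^(s+1)) * X) := by
      rw [poch_succ]
      congr 1
      rw [map_mul, map_pow]
      ring
    rw [hp, mul_assoc, step_lemma, ← mul_assoc, mul_comm _ (C (1 - q^(s+1))),
      mul_assoc, ih, ← map_mul]
    congr 1
    rw [poch_succ]
    ring

lemma A_reindex (s p : ℕ) :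
    (∏ r ∈ Finset.range s, (1 - q ^ (s + p - r))) = poch (q^(p+1)) q s := by
  rw [poch, ← Finset.prod_range_reflect]
  apply Finset.prod_congr rfl
  intro j hj
  rw [Finset.mem_range] at hj
  have h1 : s + p - (s - 1 - j) = p + 1 + j := by omega
  rw [h1, ← pow_add]

lemma qpow_identity (l s j k p : ℕ) :
    q ^ (-((l:ℤ) * (↑(s+p)))) * (q^(j*p+j) * q^(k*p+k)) =
      q ^ ((j:ℤ)+k-(l:ℤ)*(s:ℤ)) * (q^((j:ℤ)+(k:ℤ)-(l:ℤ)))^p := by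
  have h1 : ((q:Fq)) ^ (j*p+j) = q ^ ((j*p+j : ℕ) : ℤ) := (zpow_natCast _ _).symm
  have h2 : ((q:Fq)) ^ (k*p+k) = q ^ ((k*p+k : ℕ) : ℤ) := (zpow_natCast _ _).symm
  have h3 : ((q:Fq) ^ ((j:ℤ)+(k:ℤ)-(l:ℤ)))^p = q ^ (((j:ℤ)+(k:ℤ)-(l:ℤ))*(p:ℤ)) := by
    rw [← zpow_natCast (q ^ ((j:ℤ)+(k:ℤ)-(l:ℤ))) p, ← zpow_mul]
  rw [h1, h2, h3, ← zpow_add₀ q_ne_zero, ← zpow_add₀ q_ne_zero, ← zpow_add₀ q_ne_zero]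
  congr 1
  push_cast
  ring

open PowerSeries in
lemma S_eq (a g s l : ℕ) :
    (mk fun m => q ^ (-((l:ℤ) * (m:ℤ))) * elem (GopN a (a+s) * GopN (g+s) g) m) =
      C (poch (-q) q (a+(a+s)) * poch (-q) q ((g+s)+g)) * X^s *
        ∑ j ∈ Finset.range (a+1), ∑ k ∈ Finset.range (g+1),
          C ((poch (q ^ (-(a:ℤ))) q j * poch (-q ^ (-(a:ℤ))) q j /
              (poch q q j * poch (-q ^ (-((a:ℤ)+(↑(a+s))))) q j)) *
            (poch (q ^ (-(g:ℤ))) q k * poch (-q ^ (-(g:ℤ))) q k /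
              (poch q q k * poch (-q ^ (-((↑(g+s):ℤ)+(g:ℤ)))) q k)) *
            q ^ ((j:ℤ)+k-(l:ℤ)*(s:ℤ))) *
          mk (fun p => (q ^ ((j:ℤ)+(k:ℤ)-(l:ℤ)))^p * poch (q^(p+1)) q s) := by
  ext m
  rw [coeff_mk, elem_G1G2]
  trans (∑ j ∈ Finset.range (a+1), ∑ k ∈ Finset.range (g+1),
      (poch (-q) q (a+(a+s)) * poch (-q) q ((g+s)+g)) *
        ((poch (q ^ (-(a:ℤ))) q j * poch (-q ^ (-(a:ℤ))) q j /
              (poch q q j * poch (-q ^ (-((a:ℤ)+(↑(a+s))))) q j)) *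
            (poch (q ^ (-(g:ℤ))) q k * poch (-q ^ (-(g:ℤ))) q k /
              (poch q q k * poch (-q ^ (-((↑(g+s):ℤ)+(g:ℤ)))) q k)) *
            q ^ ((j:ℤ)+k-(l:ℤ)*(s:ℤ))) *
        (if s ≤ m then (q ^ ((j:ℤ)+(k:ℤ)-(l:ℤ)))^(m-s) * poch (q^(m-s+1)) q s else 0))
  · by_cases h : s ≤ m
    · obtain ⟨p, rfl⟩ : ∃ p, m = s + p := ⟨m - s, by omega⟩
      simp only [if_pos h, Nat.add_sub_cancel_left, A_reindex]
      rw [Finset.sum_mul_sum]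
      simp only [Finset.mul_sum]
      apply Finset.sum_congr rfl
      intro j _
      apply Finset.sum_congr rfl
      intro k _
      have hqi := qpow_identity l s j k p
      set c1 := poch (q ^ (-(a:ℤ))) q j * poch (-q ^ (-(a:ℤ))) q j /
                (poch q q j * poch (-q ^ (-((a:ℤ)+(↑(a+s))))) q j) with hc1
      set c2 := poch (q ^ (-(g:ℤ))) q k * poch (-q ^ (-(g:ℤ))) q k /
                (poch q q k * poch (-q ^ (-((↑(g+s):ℤ)+(g:ℤ)))) q k) with hc2
      set D := poch (-q) q (a+(a+s)) * poch (-q) q ((g+s)+g) with hD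
      set P := poch (q^(p+1)) q s with hP
      linear_combination (D * P * c1 * c2) * hqi
    · have hA : (∏ r ∈ Finset.range s, (1 - q ^ (m - r))) = 0 := by
        apply Finset.prod_eq_zero (Finset.mem_range.2 (by omega : m < s))
        simp
      simp [hA, if_neg h]
  · rw [mul_assoc]
    simp only [Finset.mul_sum, map_sum]
    apply Finset.sum_congr rfl
    intro j _
    apply Finset.sum_congr rfl
    intro k _
    have hre : ∀ (c D : Fq) (f : ℕ → Fq),
        C D * (X^s * (C c * mk f)) = C (D * c) * (X^s * mk f) := by
      intro c D f
      rw [map_mul]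
      ring
    rw [hre, coeff_C_mul, coeff_X_pow_mul']
    simp only [coeff_mk, mul_ite, mul_zero, mul_assoc]



/-! ### Transport to Laurent series -/

def phiLS : PowerSeries Fq →+* LS := HahnSeries.ofPowerSeries ℤ Fq

lemma phiLS_C (x : Fq) : phiLS (PowerSeries.C x) = CL x := by
  rw [phiLS, CL, HahnSeries.ofPowerSeries_C]

lemma phiLS_X : phiLS PowerSeries.X = T := by
  rw [phiLS, T, HahnSeries.ofPowerSeries_X]

lemma phiLS_poch (x : Fq) (n : ℕ) :
    phiLS (poch (PowerSeries.C x * PowerSeries.X) (PowerSeries.C q) n) =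
      poch (CL x * T) (CL q) n := by
  rw [poch, poch, map_prod]
  apply Finset.prod_congr rfl
  intro k _
  rw [map_sub, map_one, map_mul, map_mul, map_pow, phiLS_C, phiLS_C, phiLS_X]

lemma constCoeff_poch (x : Fq) (n : ℕ) :
    PowerSeries.constantCoeff
      (poch (PowerSeries.C x * PowerSeries.X) (PowerSeries.C q) n) = 1 := by
  rw [poch, map_prod]
  apply Finset.prod_eq_one
  intro k _
  rw [map_sub, map_one, map_mul, map_mul, map_pow]
  simp

lemma phiLS_inv (A : PowerSeries Fq) (h : PowerSeries.constantCoeff A ≠ 0) :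
    phiLS A⁻¹ = (phiLS A)⁻¹ := by
  have h1 := PowerSeries.mul_inv_cancel A h
  have h2 := congrArg phiLS h1
  rw [map_mul, map_one] at h2
  exact (inv_eq_of_mul_eq_one_right h2).symm

lemma CL_ne_zero {x : Fq} (h : x ≠ 0) : CL x ≠ 0 := HahnSeries.C_ne_zero h

lemma poch_T_ne_zero (x : Fq) (n : ℕ) : poch (CL x * T) (CL q) n ≠ 0 := by
  intro h
  rw [← phiLS_poch] at h
  have h0 : phiLS (poch (PowerSeries.C x * PowerSeries.X) (PowerSeries.C q) n) =
      phiLS 0 := by rw [h, map_zero]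
  rw [phiLS] at h0
  have h2 : poch (PowerSeries.C x * PowerSeries.X) (PowerSeries.C q) n =
      (0 : PowerSeries Fq) := HahnSeries.ofPowerSeries_injective h0
  have h3 := constCoeff_poch x n
  rw [h2, map_zero] at h3
  exact zero_ne_one h3

lemma innN_two (x1 x2 y1 y2 : ℕ) : innN ![x1,x2] ![y1,y2] = x1 * y2 := by
  rw [innN, Fin.sum_univ_two, Fin.sum_univ_two, Fin.sum_univ_two]
  norm_num

lemma Gop_coe (a b : ℕ) : Gop (a : ℤ) (b : ℤ) = GopN a b := by
  rw [Gop, if_pos ⟨Int.natCast_nonneg a, Int.natCast_nonneg b⟩, Int.toNat_natCast,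
    Int.toNat_natCast]

lemma prod_ofFn_two (a1 a2 g1 g2 : ℕ) :
    (List.ofFn fun i : Fin 2 =>
        Gop ((![a1,a2] : Fin 2 → ℕ) i) ((![g1,g2] : Fin 2 → ℕ) i)).prod =
      GopN a1 g1 * GopN a2 g2 := by
  rw [List.ofFn_succ, List.ofFn_succ, List.ofFn_zero, List.prod_cons, List.prod_cons,
    List.prod_nil, mul_one]
  norm_num [Gop_coe]


lemma zpow_two_collect (a : ℕ) : ((q : Fq) ^ (-(a:ℤ)))^2 = q ^ (-(2 * a : ℤ)) := by
  rw [← zpow_natCast (q ^ (-(a:ℤ))) 2, ← zpow_mul]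
  congr 1
  push_cast
  ring

lemma core_term (a g s j k : ℕ) :
    (poch (q ^ (-(a:ℤ))) q j * poch (-q ^ (-(a:ℤ))) q j /
        (poch q q j * poch (-q ^ (-((a:ℤ)+(↑(a+s))))) q j)) *
      (poch (q ^ (-(g:ℤ))) q k * poch (-q ^ (-(g:ℤ))) q k /
        (poch q q k * poch (-q ^ (-((↑(g+s):ℤ)+(g:ℤ)))) q k)) *
      q ^ (j+k) =
    (q ^ (j + k) * poch (q ^ (-(2 * a : ℤ))) (q ^ 2) j * poch (q ^ (-(2 * g : ℤ))) (q ^ 2) k) /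
      (poch q q j * poch q q k * poch (-q ^ (-(a:ℤ) - ↑(a+s))) q j *
        poch (-q ^ (-(↑(g+s):ℤ) - ↑g)) q k) := by
  have e1 : (-(a:ℤ) - ↑(a+s)) = -((a:ℤ)+(↑(a+s))) := by ring
  have e2 : (-(↑(g+s):ℤ) - ↑g) = -((↑(g+s):ℤ)+(g:ℤ)) := by ring
  rw [e1, e2]
  have m1 : poch (q ^ (-(a:ℤ))) q j * poch (-q ^ (-(a:ℤ))) q j =
      poch (q ^ (-(2*a:ℤ))) (q^2) j := by
    rw [poch_mul_poch_neg, zpow_two_collect]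
  have m2 : poch (q ^ (-(g:ℤ))) q k * poch (-q ^ (-(g:ℤ))) q k =
      poch (q ^ (-(2*g:ℤ))) (q^2) k := by
    rw [poch_mul_poch_neg, zpow_two_collect]
  rw [← m1, ← m2]
  have h1 : poch q q j ≠ 0 := poch_q_q_ne_zero j
  have h2 : poch q q k ≠ 0 := poch_q_q_ne_zero k
  have h3 : poch (-q ^ (-((a:ℤ)+(↑(a+s))))) q j ≠ 0 := poch_neg_zpow_ne_zero _ _
  have h4 : poch (-q ^ (-((↑(g+s):ℤ)+(g:ℤ)))) q k ≠ 0 := poch_neg_zpow_ne_zero _ _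
  rw [div_mul_div_comm, div_mul_eq_mul_div, div_eq_div_iff
    (mul_ne_zero (mul_ne_zero h1 h3) (mul_ne_zero h2 h4))
    (mul_ne_zero (mul_ne_zero (mul_ne_zero h1 h2) h3) h4)]
  ring

open PowerSeries in
lemma phiLS_mk_key (x : Fq) (s : ℕ) :
    phiLS (mk fun p => x^p * poch (q^(p+1)) q s) =
      CL (poch q q s) * (poch (CL x * T) (CL q) (s+1))⁻¹ := by
  have h := congrArg phiLS (key_lemma x s)
  rw [map_mul, phiLS_poch, phiLS_C] at h
  have hnz := poch_T_ne_zero x (s+1)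
  have h5 : phiLS (mk fun p => x^p * poch (q^(p+1)) q s) =
      (poch (CL x * T) (CL q) (s+1))⁻¹ *
        (poch (CL x * T) (CL q) (s+1) * phiLS (mk fun p => x^p * poch (q^(p+1)) q s)) := by
    rw [← mul_assoc, inv_mul_cancel₀ hnz, one_mul]
  rw [h5, h]
  ring


lemma Kmat_eq (n l : ℕ) (α γ : Fin n → ℕ) :
    Kmat n l α γ = phiLS (KmatPS (RingHom.id Fq) n l α γ) := rfl

open PowerSeries in
lemma phiLS_big (a g s l : ℕ) :
    phiLS (C (poch (-q) q (a+(a+s)) * poch (-q) q ((g+s)+g)) * X^s *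
        ∑ j ∈ Finset.range (a+1), ∑ k ∈ Finset.range (g+1),
          C ((poch (q ^ (-(a:ℤ))) q j * poch (-q ^ (-(a:ℤ))) q j /
              (poch q q j * poch (-q ^ (-((a:ℤ)+(↑(a+s))))) q j)) *
            (poch (q ^ (-(g:ℤ))) q k * poch (-q ^ (-(g:ℤ))) q k /
              (poch q q k * poch (-q ^ (-((↑(g+s):ℤ)+(g:ℤ)))) q k)) *
            q ^ ((j:ℤ)+k-(l:ℤ)*(s:ℤ))) *
          mk (fun p => (q ^ ((j:ℤ)+(k:ℤ)-(l:ℤ)))^p * poch (q^(p+1)) q s)) =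
      CL (poch (-q) q (a+(a+s)) * poch (-q) q ((g+s)+g)) * T^s *
        ∑ j ∈ Finset.range (a+1), ∑ k ∈ Finset.range (g+1),
          CL ((poch (q ^ (-(a:ℤ))) q j * poch (-q ^ (-(a:ℤ))) q j /
              (poch q q j * poch (-q ^ (-((a:ℤ)+(↑(a+s))))) q j)) *
            (poch (q ^ (-(g:ℤ))) q k * poch (-q ^ (-(g:ℤ))) q k /
              (poch q q k * poch (-q ^ (-((↑(g+s):ℤ)+(g:ℤ)))) q k)) *
            q ^ ((j:ℤ)+k-(l:ℤ)*(s:ℤ))) *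
          (CL (poch q q s) * (poch (CL (q ^ ((j:ℤ)+(k:ℤ)-(l:ℤ))) * T) (CL q) (s+1))⁻¹) := by
  rw [map_mul, map_mul, phiLS_C, map_pow, phiLS_X, map_sum]
  congr 1
  apply Finset.sum_congr rfl
  intro j _
  rw [map_sum]
  apply Finset.sum_congr rfl
  intro k _
  rw [map_mul, phiLS_C, phiLS_mk_key]

/-- the explicit double-sum formula for all matrix elements of the `K` matrix
of `U_q(A^{(1)}_1)` (the case `n = 2`), assuming `s = γ₁ - α₁ = α₂ - γ₂ ≥ 0`. -/
theorem statement8 (l α₁ α₂ γ₁ γ₂ s : ℕ) (hα : α₁ + α₂ = l) (hγ : γ₁ + γ₂ = l)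
    (hs1 : γ₁ = α₁ + s) (hs2 : α₂ = γ₂ + s) :
    Kmat 2 l ![α₁, α₂] ![γ₁, γ₂] =
      CL (q ^ (α₁ * γ₂)) * T ^ s *
        poch (CL (q ^ (-(l : ℤ))) * T) (CL q) (l + 1) *
        CL (poch q q s * poch (-q) q (α₁ + γ₁) * poch (-q) q (α₂ + γ₂)) *
        (CL (poch (q ^ 2) (q ^ 2) l) * poch (-CL q * T) (CL q) l)⁻¹ *
        ∑ j ∈ Finset.range (α₁ + 1), ∑ k ∈ Finset.range (γ₂ + 1),
          CL (q ^ (j + k) * poch (q ^ (-(2 * α₁ : ℤ))) (q ^ 2) j *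
              poch (q ^ (-(2 * γ₂ : ℤ))) (q ^ 2) k) *
            (poch (CL (q ^ ((j : ℤ) + k - l)) * T) (CL q) (s + 1) *
                CL (poch q q j * poch q q k * poch (-q ^ (-(α₁ : ℤ) - γ₁)) q j *
                    poch (-q ^ (-(α₂ : ℤ) - γ₂)) q k))⁻¹ := by
  subst hs1
  subst hs2
  rw [Kmat_eq, KmatPS]
  simp only [RingHom.id_apply, innN_two, prod_ofFn_two]
  rw [S_eq]
  have hW : PowerSeries.constantCoeff
      (PowerSeries.C (poch (q^2) (q^2) l) *
        poch (PowerSeries.C (-q) * PowerSeries.X) (PowerSeries.C q) l) ≠ 0 := by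
    rw [map_mul, PowerSeries.constantCoeff_C, constCoeff_poch, mul_one]
    exact poch_q2_q2_ne_zero l
  rw [map_mul]
  rw [phiLS_big]
  rw [map_mul, map_mul, phiLS_C, phiLS_poch, phiLS_inv _ hW, map_mul, phiLS_C,
    phiLS_poch, map_neg]
  have hsumR : (∑ j ∈ Finset.range (α₁ + 1), ∑ k ∈ Finset.range (γ₂ + 1),
        CL (q ^ (j + k) * poch (q ^ (-(2 * α₁ : ℤ))) (q ^ 2) j *
            poch (q ^ (-(2 * γ₂ : ℤ))) (q ^ 2) k) *
          (poch (CL (q ^ ((j : ℤ) + k - l)) * T) (CL q) (s + 1) *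
              CL (poch q q j * poch q q k * poch (-q ^ (-(α₁ : ℤ) - ↑(α₁+s))) q j *
                  poch (-q ^ (-(↑(γ₂+s) : ℤ) - ↑γ₂)) q k))⁻¹) =
      (∑ j ∈ Finset.range (α₁ + 1), ∑ k ∈ Finset.range (γ₂ + 1),
        CL ((poch (q ^ (-(α₁:ℤ))) q j * poch (-q ^ (-(α₁:ℤ))) q j /
              (poch q q j * poch (-q ^ (-((α₁:ℤ)+(↑(α₁+s))))) q j)) *
            (poch (q ^ (-(γ₂:ℤ))) q k * poch (-q ^ (-(γ₂:ℤ))) q k /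
              (poch q q k * poch (-q ^ (-((↑(γ₂+s):ℤ)+(γ₂:ℤ)))) q k)) *
            q ^ (j+k)) *
          (poch (CL (q ^ ((j:ℤ)+(k:ℤ)-(l:ℤ))) * T) (CL q) (s+1))⁻¹) := by
    apply Finset.sum_congr rfl
    intro j _
    apply Finset.sum_congr rfl
    intro k _
    rw [core_term α₁ γ₂ s j k, map_div₀]
    ring
  rw [hsumR]
  have hsumL : (∑ j ∈ Finset.range (α₁+1), ∑ k ∈ Finset.range (γ₂+1),
        CL ((poch (q ^ (-(α₁:ℤ))) q j * poch (-q ^ (-(α₁:ℤ))) q j /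
              (poch q q j * poch (-q ^ (-((α₁:ℤ)+(↑(α₁+s))))) q j)) *
            (poch (q ^ (-(γ₂:ℤ))) q k * poch (-q ^ (-(γ₂:ℤ))) q k /
              (poch q q k * poch (-q ^ (-((↑(γ₂+s):ℤ)+(γ₂:ℤ)))) q k)) *
            q ^ ((j:ℤ)+k-(l:ℤ)*(s:ℤ))) *
          (CL (poch q q s) * (poch (CL (q ^ ((j:ℤ)+(k:ℤ)-(l:ℤ))) * T) (CL q) (s+1))⁻¹)) =
      CL (poch q q s) * (CL (q ^ (-((l:ℤ)*(s:ℤ)))) *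
        (∑ j ∈ Finset.range (α₁+1), ∑ k ∈ Finset.range (γ₂+1),
          CL ((poch (q ^ (-(α₁:ℤ))) q j * poch (-q ^ (-(α₁:ℤ))) q j /
                (poch q q j * poch (-q ^ (-((α₁:ℤ)+(↑(α₁+s))))) q j)) *
              (poch (q ^ (-(γ₂:ℤ))) q k * poch (-q ^ (-(γ₂:ℤ))) q k /
                (poch q q k * poch (-q ^ (-((↑(γ₂+s):ℤ)+(γ₂:ℤ)))) q k)) *
              q ^ (j+k)) *
            (poch (CL (q ^ ((j:ℤ)+(k:ℤ)-(l:ℤ))) * T) (CL q) (s+1))⁻¹)) := by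
    rw [Finset.mul_sum, Finset.mul_sum]
    apply Finset.sum_congr rfl
    intro j _
    rw [Finset.mul_sum, Finset.mul_sum]
    apply Finset.sum_congr rfl
    intro k _
    have hsplit : (q:Fq) ^ ((j:ℤ)+(k:ℤ)-(l:ℤ)*(s:ℤ)) =
        q ^ (-((l:ℤ)*(s:ℤ))) * q ^ (j+k) := by
      rw [← zpow_natCast q (j+k), ← zpow_add₀ q_ne_zero]
      congr 1
      push_cast
      ring
    rw [hsplit]
    simp only [map_mul]
    ring
  rw [hsumL]
  have hqm : CL ((q:Fq) ^ ((α₁+s)*(γ₂+s))) * CL (q ^ (-((l:ℤ)*(s:ℤ)))) =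
      CL (q ^ (α₁*γ₂)) := by
    rw [← map_mul]
    congr 1
    rw [← zpow_natCast q ((α₁+s)*(γ₂+s)), ← zpow_natCast q (α₁*γ₂),
      ← zpow_add₀ q_ne_zero]
    congr 1
    have hl : (l:ℤ) = (α₁:ℤ) + γ₂ + s := by
      have : l = α₁ + γ₂ + s := by omega
      exact_mod_cast congrArg (Nat.cast : ℕ → ℤ) this
    rw [hl]
    push_cast
    ring
  rw [map_mul, map_mul, map_mul]
  linear_combination (poch (CL ((q:Fq) ^ (-(l:ℤ))) * T) (CL q) (l+1) *
    (CL (poch ((q:Fq)^2) ((q:Fq)^2) l) * poch (-CL q * T) (CL q) l)⁻¹ *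
    CL (poch (-(q:Fq)) q (α₁+(α₁+s))) * CL (poch (-(q:Fq)) q ((γ₂+s)+γ₂)) * T^s *
    CL (poch (q:Fq) q s) *
    (∑ j ∈ Finset.range (α₁+1), ∑ k ∈ Finset.range (γ₂+1),
      CL ((poch ((q:Fq) ^ (-(α₁:ℤ))) q j * poch (-q ^ (-(α₁:ℤ))) q j /
            (poch q q j * poch (-q ^ (-((α₁:ℤ)+(↑(α₁+s))))) q j)) *
          (poch (q ^ (-(γ₂:ℤ))) q k * poch (-q ^ (-(γ₂:ℤ))) q k /
            (poch q q k * poch (-q ^ (-((↑(γ₂+s):ℤ)+(γ₂:ℤ)))) q k)) *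
          q ^ (j+k)) *
        (poch (CL (q ^ ((j:ℤ)+(k:ℤ)-(l:ℤ))) * T) (CL q) (s+1))⁻¹)) * hqm

end KOY
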